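/- Let Λ = k[ε]/(ε²) be the exterior algebra on one generator over a field k, viewed as a graded algebra with deg ε = 1 and zero differential, and let P be the Λ-dg-module ⊕_{i≥0} Λ·e_i with d(e_0) = 0, d(e_i) = ε·e_{i-1} for i > 0, deg e_i = 0. Then the algebra of degree-zero Λ-linear endomorphisms of P commuting with the differential is isomorphic to the power series ring k[[t]], where t is the shift map e_i ↦ e_{i-1}. -/

import Mathlib

open Finsupp

/-- The differential of the dg-module `P = ⊕_{i ≥ 0} Λ·e_i` over `Λ = k[ε]/(ε²)`:
`d e_0 = 0` and `d e_i = ε·e_{i-1}` for `i > 0`. -/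
noncomputable def koszulDiff (k : Type u) [Field k] :
    (ℕ →₀ DualNumber k) →ₗ[DualNumber k] (ℕ →₀ DualNumber k) :=
  Finsupp.lsum (DualNumber k) fun i =>
    match i with
    | 0 => 0
    | (j + 1) => (Finsupp.lsingle j).comp
        (LinearMap.toSpanSingleton (DualNumber k) (DualNumber k) DualNumber.eps)

section Aux

variable (k : Type u) [Field k]


lemma koszulDiff_single_zero (a : DualNumber k) :
    koszulDiff k (Finsupp.single 0 a) = 0 := by
  simp [koszulDiff]

lemma koszulDiff_single_succ (j : ℕ) (a : DualNumber k) :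
    koszulDiff k (Finsupp.single (j+1) a) = Finsupp.single j (a * DualNumber.eps) := by
  simp [koszulDiff, LinearMap.toSpanSingleton_apply, smul_eq_mul]

lemma koszulDiff_apply (x : ℕ →₀ DualNumber k) (j : ℕ) :
    (koszulDiff k x) j = x (j+1) * DualNumber.eps := by
  induction x using Finsupp.induction_linear with
  | zero => simp
  | add f g hf hg => simp [map_add, hf, hg, add_mul]
  | single i a =>
    cases i with
    | zero => simp [koszulDiff_single_zero, Finsupp.single_apply]
    | succ m =>
      rw [koszulDiff_single_succ]
      simp only [Finsupp.single_apply, Nat.succ.injEq, add_left_inj]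
      split_ifs <;> simp

/-- the value of `F f` on `e_i`. -/
noncomputable def wMap (f : PowerSeries k) (i : ℕ) : ℕ →₀ DualNumber k :=
  ∑ j ∈ Finset.range (i+1),
    Finsupp.single j (algebraMap k (DualNumber k) (PowerSeries.coeff (i - j) f))

lemma wMap_apply (f : PowerSeries k) (i j : ℕ) :
    (wMap k f i) j = if j ≤ i then algebraMap k (DualNumber k) (PowerSeries.coeff (i - j) f) else 0 := by
  rw [wMap, Finsupp.finset_sum_apply]
  rw [Finset.sum_congr rfl (fun x _ => Finsupp.single_apply)]
  rw [Finset.sum_ite_eq' (Finset.range (i+1)) j]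
  simp [Nat.lt_succ_iff]

noncomputable def Fmap (f : PowerSeries k) :
    Module.End (DualNumber k) (ℕ →₀ DualNumber k) :=
  Finsupp.lsum (DualNumber k) fun i =>
    LinearMap.toSpanSingleton (DualNumber k) _ (wMap k f i)

lemma Fmap_single (f : PowerSeries k) (i : ℕ) (a : DualNumber k) :
    Fmap k f (Finsupp.single i a) = a • wMap k f i := by
  simp [Fmap]

lemma Fmap_single_one (f : PowerSeries k) (i : ℕ) :
    Fmap k f (Finsupp.single i 1) = wMap k f i := by
  simp [Fmap_single]

lemma wMap_one (i : ℕ) : wMap k 1 i = Finsupp.single i 1 := by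
  apply Finsupp.ext
  intro j
  rw [wMap_apply]
  simp only [Finsupp.single_apply, PowerSeries.coeff_one]
  by_cases h : j ≤ i
  · by_cases h2 : i = j
    · subst h2; simp
    · have : ¬ (i - j = 0) := by omega
      simp [h, h2, this]
  · have : ¬ (i = j) := by omega
    simp [h, this]

lemma Fmap_one : Fmap k 1 = 1 := by
  apply Finsupp.lhom_ext
  intro i a
  rw [Fmap_single, wMap_one, Module.End.one_apply, Finsupp.smul_single, smul_eq_mul, mul_one]

lemma Fmap_mul (f g : PowerSeries k) : Fmap k (f * g) = Fmap k f * Fmap k g := by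
  apply Finsupp.lhom_ext
  intro i a
  rw [Fmap_single, Module.End.mul_apply, Fmap_single, map_smul]
  congr 1
  apply Finsupp.ext
  intro j
  rw [wMap_apply, wMap, map_sum, Finsupp.finset_sum_apply]
  have hterm : ∀ l, (Fmap k f (Finsupp.single l (algebraMap k (DualNumber k) (PowerSeries.coeff (i - l) g)))) j
      = if j ≤ l then algebraMap k (DualNumber k) (PowerSeries.coeff (i - l) g * PowerSeries.coeff (l - j) f) else 0 := by
    intro l
    rw [Fmap_single, Finsupp.smul_apply, wMap_apply, smul_ite, smul_zero, smul_eq_mul,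
      ← map_mul]
  rw [Finset.sum_congr rfl (fun l _ => hterm l)]
  by_cases h : j ≤ i
  · rw [if_pos h, PowerSeries.coeff_mul, Finset.Nat.sum_antidiagonal_eq_sum_range_succ_mk,
      map_sum]
    conv_rhs => rw [Finset.range_eq_Ico, ← Finset.sum_Ico_consecutive _ (Nat.zero_le j) (by omega : j ≤ i + 1)]
    have h1 : ∑ l ∈ Finset.Ico 0 j, (if j ≤ l then algebraMap k (DualNumber k) (PowerSeries.coeff (i - l) g * PowerSeries.coeff (l - j) f) else 0) = 0 := by
      apply Finset.sum_eq_zero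
      intro l hl
      rw [Finset.mem_Ico] at hl
      rw [if_neg (by omega)]
    rw [h1, zero_add, Finset.sum_Ico_eq_sum_range]
    have h2 : i + 1 - j = (i - j) + 1 := by omega
    rw [h2]
    apply Finset.sum_congr (by simp)
    intro p hp
    rw [Finset.mem_range] at hp
    have e0 : j + p - j = p := by omega
    have e1 : i - (j + p) = i - j - p := by omega
    rw [if_pos (Nat.le_add_right j p), e0, e1, mul_comm]
  · rw [if_neg h]
    symm
    apply Finset.sum_eq_zero
    intro l hl
    rw [Finset.mem_range] at hl
    rw [if_neg (by omega)]

lemma wMap_add (f g : PowerSeries k) (i : ℕ) :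
    wMap k (f + g) i = wMap k f i + wMap k g i := by
  apply Finsupp.ext
  intro j
  rw [Finsupp.add_apply, wMap_apply, wMap_apply, wMap_apply]
  split_ifs <;> simp

lemma Fmap_add (f g : PowerSeries k) : Fmap k (f + g) = Fmap k f + Fmap k g := by
  apply Finsupp.lhom_ext
  intro i a
  simp [Fmap_single, wMap_add, smul_add]

lemma Fmap_algebraMap (a : k) :
    Fmap k (algebraMap k (PowerSeries k) a) =
      algebraMap k (Module.End (DualNumber k) (ℕ →₀ DualNumber k)) a := by
  apply Finsupp.lhom_ext
  intro i b
  rw [Fmap_single]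
  have hw : wMap k (algebraMap k (PowerSeries k) a) i = Finsupp.single i (algebraMap k (DualNumber k) a) := by
    apply Finsupp.ext
    intro j
    rw [wMap_apply]
    simp only [Finsupp.single_apply]
    by_cases h : j ≤ i
    · by_cases h2 : i = j
      · subst h2
        simp [PowerSeries.algebraMap_apply, PowerSeries.coeff_C]
      · have : ¬ (i - j = 0) := by omega
        simp [h, h2, this, PowerSeries.algebraMap_apply, PowerSeries.coeff_C]
    · have : ¬ (i = j) := by omega
      simp [h, this]
  rw [hw]
  rw [Module.algebraMap_end_apply]
  apply Finsupp.ext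
  intro j
  simp only [Finsupp.smul_apply, Finsupp.single_apply]
  split_ifs <;> simp [Algebra.smul_def, mul_comm]

lemma Fmap_zero : Fmap k 0 = 0 := by
  apply Finsupp.lhom_ext
  intro i a
  rw [Fmap_single]
  have : wMap k 0 i = 0 := by
    apply Finsupp.ext
    intro j
    rw [wMap_apply]
    split_ifs <;> simp
  simp [this]

noncomputable def FAlg : PowerSeries k →ₐ[k] Module.End (DualNumber k) (ℕ →₀ DualNumber k) where
  toFun := Fmap k
  map_one' := Fmap_one k
  map_mul' := Fmap_mul k
  map_zero' := Fmap_zero k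
  map_add' := Fmap_add k
  commutes' := Fmap_algebraMap k

lemma FAlg_injective : Function.Injective (FAlg k) := by
  intro f g h
  apply PowerSeries.ext
  intro n
  have := congrArg (fun φ : Module.End (DualNumber k) (ℕ →₀ DualNumber k) =>
    (φ (Finsupp.single n 1)) 0) h
  simp only [FAlg, AlgHom.coe_mk, RingHom.coe_mk, MonoidHom.coe_mk, OneHom.coe_mk,
    Fmap_single_one, wMap_apply, Nat.zero_le, if_pos, Nat.sub_zero] at this
  exact (algebraMap k (DualNumber k)).injective this

lemma FAlg_X (i : ℕ) : (FAlg k) PowerSeries.X (Finsupp.single i 1) =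
    (match i with
    | 0 => (0 : ℕ →₀ DualNumber k)
    | (j + 1) => Finsupp.single j 1) := by
  show Fmap k PowerSeries.X (Finsupp.single i 1) = _
  rw [Fmap_single_one]
  apply Finsupp.ext
  intro j
  rw [wMap_apply]
  cases i with
  | zero =>
    simp [PowerSeries.coeff_X, Nat.le_zero]
  | succ m =>
    simp only [PowerSeries.coeff_X, Finsupp.single_apply]
    by_cases h : j ≤ m + 1
    · by_cases h2 : m = j
      · subst h2
        simp
      · have : ¬ (m + 1 - j = 1) := by omega
        simp [h, h2, this]
    · have : ¬ (m = j) := by omega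
      simp [h, this]

open TrivSqZeroExt in
lemma mul_eps_eq (x : DualNumber k) : x * DualNumber.eps = inr x.fst := by
  ext <;> simp [fst_mul, DualNumber.snd_mul]

open TrivSqZeroExt in
lemma eps_mul_eq (x : DualNumber k) : DualNumber.eps * x = inr x.fst := by
  ext <;> simp [fst_mul, DualNumber.snd_mul]

lemma Fmap_snd (f : PowerSeries k) (i j : ℕ) :
    ((Fmap k f (Finsupp.single i 1)) j).snd = 0 := by
  rw [Fmap_single_one, wMap_apply]
  split_ifs <;> simp [TrivSqZeroExt.algebraMap_eq_inl]

lemma Fmap_comm_diff (f : PowerSeries k) :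
    Fmap k f ∘ₗ koszulDiff k = koszulDiff k ∘ₗ Fmap k f := by
  apply Finsupp.lhom_ext
  intro i a
  simp only [LinearMap.comp_apply]
  cases i with
  | zero =>
    rw [koszulDiff_single_zero, map_zero, Fmap_single, map_smul]
    have : koszulDiff k (wMap k f 0) = 0 := by
      apply Finsupp.ext
      intro j
      rw [koszulDiff_apply, wMap_apply]
      simp
    simp [this]
  | succ m =>
    rw [koszulDiff_single_succ, Fmap_single, Fmap_single, map_smul]
    apply Finsupp.ext
    intro j
    rw [Finsupp.smul_apply, Finsupp.smul_apply, koszulDiff_apply, wMap_apply, wMap_apply]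
    have hc : (j + 1 ≤ m + 1) = (j ≤ m) := by simp
    by_cases h : j ≤ m
    · rw [if_pos h, if_pos (by omega : j + 1 ≤ m + 1)]
      have : m + 1 - (j + 1) = m - j := by omega
      rw [this, smul_eq_mul, smul_eq_mul]
      ring
    · rw [if_neg h, if_neg (by omega : ¬ j + 1 ≤ m + 1)]
      simp

open TrivSqZeroExt in
lemma key_formula (φ : Module.End (DualNumber k) (ℕ →₀ DualNumber k))
    (hsnd : ∀ i j : ℕ, ((φ (Finsupp.single i 1)) j).snd = 0)
    (hcomm : φ ∘ₗ koszulDiff k = koszulDiff k ∘ₗ φ) :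
    ∀ j i : ℕ, (φ (Finsupp.single i 1)) j =
      if j ≤ i then algebraMap k (DualNumber k) ((φ (Finsupp.single (i - j) 1) : ℕ →₀ DualNumber k) 0).fst
      else 0 := by
  have hrel0 : ∀ j : ℕ, ((φ (Finsupp.single 0 1)) (j + 1)).fst = 0 := by
    intro j
    have h := congrArg (fun ψ : (ℕ →₀ DualNumber k) →ₗ[DualNumber k] (ℕ →₀ DualNumber k) =>
      (ψ (Finsupp.single 0 1)) j) hcomm
    simp only [LinearMap.comp_apply] at h
    rw [koszulDiff_single_zero, map_zero, koszulDiff_apply] at h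
    have h2 := congrArg TrivSqZeroExt.snd h
    rw [mul_eps_eq] at h2
    simpa using h2.symm
  have hrel : ∀ m j : ℕ, ((φ (Finsupp.single (m + 1) 1)) (j + 1)).fst =
      ((φ (Finsupp.single m 1)) j).fst := by
    intro m j
    have h := congrArg (fun ψ : (ℕ →₀ DualNumber k) →ₗ[DualNumber k] (ℕ →₀ DualNumber k) =>
      (ψ (Finsupp.single (m + 1) 1)) j) hcomm
    simp only [LinearMap.comp_apply] at h
    rw [koszulDiff_single_succ, one_mul, koszulDiff_apply] at h
    have hsm : Finsupp.single m DualNumber.eps =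
        (DualNumber.eps : DualNumber k) • (Finsupp.single m 1 : ℕ →₀ DualNumber k) := by
      rw [Finsupp.smul_single, smul_eq_mul, mul_one]
    rw [hsm, map_smul] at h
    have h2 := congrArg TrivSqZeroExt.snd h
    rw [Finsupp.smul_apply, smul_eq_mul, eps_mul_eq, mul_eps_eq] at h2
    simp only [snd_inr] at h2
    exact h2.symm
  intro j
  induction j with
  | zero =>
    intro i
    rw [if_pos (Nat.zero_le i), Nat.sub_zero]
    ext
    · simp [TrivSqZeroExt.algebraMap_eq_inl]
    · rw [hsnd]
      simp [TrivSqZeroExt.algebraMap_eq_inl]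
  | succ j ih =>
    intro i
    cases i with
    | zero =>
      rw [if_neg (by omega)]
      ext
      · simpa using hrel0 j
      · simpa using hsnd 0 (j + 1)
    | succ m =>
      have hfst : ((φ (Finsupp.single (m + 1) 1)) (j + 1)).fst =
          if j ≤ m then ((φ (Finsupp.single (m - j) 1) : ℕ →₀ DualNumber k) 0).fst else 0 := by
        rw [hrel m j, ih m]
        split_ifs <;> simp [TrivSqZeroExt.algebraMap_eq_inl]
      by_cases h : j ≤ m
      · rw [if_pos (by omega : j + 1 ≤ m + 1)]
        have : m + 1 - (j + 1) = m - j := by omega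
        rw [this]
        ext
        · rw [hfst, if_pos h]
          simp [TrivSqZeroExt.algebraMap_eq_inl]
        · rw [hsnd]
          simp [TrivSqZeroExt.algebraMap_eq_inl]
      · rw [if_neg (by omega)]
        ext
        · rw [hfst, if_neg h]
          simp
        · simpa using hsnd (m + 1) (j + 1)

end Aux

/-- Let `Λ = k[ε]/(ε²)` (with `ε` in degree `1`) and let `P = ⊕_{i ≥ 0} Λ·e_i`
(generators `e_i` in degree `0`) with differential `d e_i = ε·e_{i-1}`, `d e_0 = 0`.
The algebra of degree-zero `Λ`-linear endomorphisms of `P` commuting with the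
differential is isomorphic to the power series ring `k[[t]]`: there is an injective
`k`-algebra homomorphism from `k[[t]]` to `End_Λ(P)` whose range is exactly this set,
sending `t` to the shift `e_i ↦ e_{i-1}`. -/
theorem endomorphisms_of_koszul_resolution (k : Type u) [Field k] :
    ∃ F : PowerSeries k →ₐ[k] Module.End (DualNumber k) (ℕ →₀ DualNumber k),
      Function.Injective F ∧
      (∀ i : ℕ, (F PowerSeries.X) (Finsupp.single i 1) =
        match i with
        | 0 => 0
        | (j + 1) => Finsupp.single j 1) ∧
      Set.range F = {φ : Module.End (DualNumber k) (ℕ →₀ DualNumber k) |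
        (∀ i j : ℕ, ((φ (Finsupp.single i 1)) j).snd = 0) ∧
        φ ∘ₗ koszulDiff k = koszulDiff k ∘ₗ φ} := by
  refine ⟨FAlg k, FAlg_injective k, FAlg_X k, ?_⟩
  ext φ
  constructor
  · rintro ⟨f, rfl⟩
    exact ⟨Fmap_snd k f, Fmap_comm_diff k f⟩
  · rintro ⟨hsnd, hcomm⟩
    refine ⟨PowerSeries.mk fun r => ((φ (Finsupp.single r 1) : ℕ →₀ DualNumber k) 0).fst, ?_⟩
    show Fmap k _ = φ
    apply Finsupp.lhom_ext
    intro i a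
    have hb : (Finsupp.single i a : ℕ →₀ DualNumber k) = a • Finsupp.single i 1 := by
      rw [Finsupp.smul_single, smul_eq_mul, mul_one]
    rw [hb, map_smul, map_smul, Fmap_single_one]
    congr 1
    apply Finsupp.ext
    intro j
    rw [wMap_apply, key_formula k φ hsnd hcomm j i]
    split_ifs with h
    · rw [PowerSeries.coeff_mk]
    · rfl
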